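/- Let A be an r × n real matrix, c ∈ ℝⁿ, X ⊆ ℝ^m, L_b ≥ 0, and let b : ℝ^m → ℝ^r be L_b-Lipschitz on X. For x ∈ X define the polyhedron Ω(x) = {y ∈ ℝⁿ : A·y ≥ b(x) componentwise and y ≥ c componentwise}, and assume Ω(x) is nonempty for every x ∈ X. For x ∈ X and v ∈ ℝⁿ let P(x,v) denote the metric projection of v onto Ω(x). Then there exists L' ≥ 0 such that for every v ∈ ℝⁿ and all x₁, x₂ ∈ X, ‖P(x₁, v) − P(x₂, v)‖ ≤ L'·‖x₁ − x₂‖; i.e., the projection onto the moving polyhedron is Lipschitz in the parameter x, uniformly in v. -/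

import Mathlib

open scoped RealInnerProductSpace

set_option linter.unusedSectionVars false

namespace Stmt18Aux

open Set Submodule

variable {E : Type*} [NormedAddCommGroup E] [InnerProductSpace ℝ E] [FiniteDimensional ℝ E]
variable {ι : Type*} [Fintype ι]

/-- The feasible polyhedron `{y : ∀ i, q i ≤ ⟪a i, y⟫}`. -/
def Feas (a : ι → E) (q : ι → ℝ) : Set E := {y | ∀ i, q i ≤ ⟪a i, y⟫}

lemma feas_convex (a : ι → E) (q : ι → ℝ) : Convex ℝ (Feas a q) := by
  intro y hy z hz s t hs ht hst i
  have h1 := hy i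
  have h2 := hz i
  simp only [inner_add_right, real_inner_smul_right]
  calc q i = s * q i + t * q i := by rw [← add_mul, hst, one_mul]
    _ ≤ s * ⟪a i, y⟫ + t * ⟪a i, z⟫ :=
        add_le_add (mul_le_mul_of_nonneg_left h1 hs) (mul_le_mul_of_nonneg_left h2 ht)

lemma feas_closed (a : ι → E) (q : ι → ℝ) : IsClosed (Feas a q) := by
  have : Feas a q = ⋂ i, {y | q i ≤ ⟪a i, y⟫} := by
    ext y; simp [Feas, Set.mem_iInter]
  rw [this]
  exact isClosed_iInter fun i =>
    isClosed_le continuous_const (continuous_const.inner continuous_id)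

/-- Uniqueness of a point satisfying the variational inequality. -/
lemma vi_unique {K : Set E} {v p p' : E}
    (hp : p ∈ K) (hp' : p' ∈ K)
    (h : ∀ w ∈ K, ⟪v - p, w - p⟫ ≤ 0)
    (h' : ∀ w ∈ K, ⟪v - p', w - p'⟫ ≤ 0) : p = p' := by
  have h1 := h p' hp'
  have h2 := h' p hp
  have key : ⟪p' - p, p' - p⟫ ≤ 0 := by
    have e1 : ⟪p' - p, p' - p⟫ = ⟪v - p, p' - p⟫ - ⟪v - p', p' - p⟫ := by
      rw [← inner_sub_left]; congr 1; abel
    have e2 : ⟪v - p', p' - p⟫ = -⟪v - p', p - p'⟫ := by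
      rw [← inner_neg_right]; congr 1; abel
    rw [e1, e2]; linarith
  have h0 : p' - p = 0 := real_inner_self_nonpos.mp key
  exact (sub_eq_zero.mp h0).symm

/-- The variational inequality implies distance minimality. -/
lemma vi_min {K : Set E} {v p : E} (h : ∀ w ∈ K, ⟪v - p, w - p⟫ ≤ 0) :
    ∀ w ∈ K, ‖v - p‖ ≤ ‖v - w‖ := by
  intro w hw
  have h1 := h w hw
  have expand : ‖v - w‖ ^ 2 = ‖v - p‖ ^ 2 - 2 * ⟪v - p, w - p⟫ + ‖w - p‖ ^ 2 := by
    rw [show (v - w : E) = (v - p) - (w - p) by abel]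
    rw [norm_sub_sq_real]
  nlinarith [norm_nonneg (v - w), norm_nonneg (v - p), sq_nonneg (‖w - p‖)]

/-- Existence of a point satisfying the variational inequality. -/
lemma exists_vi {a : ι → E} {q : ι → ℝ} (hne : (Feas a q).Nonempty) (v : E) :
    ∃ p ∈ Feas a q, ∀ w ∈ Feas a q, ⟪v - p, w - p⟫ ≤ 0 := by
  obtain ⟨p, hp, hmin⟩ := exists_norm_eq_iInf_of_complete_convex hne
    ((feas_closed a q).isComplete) (feas_convex a q) v
  exact ⟨p, hp, (norm_eq_iInf_iff_real_inner_le_zero (feas_convex a q) hp).mp hmin⟩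

/-- On the span of `{a i : i ∈ S}`, the norm is controlled by the inner products
against the `a i`, `i ∈ S`. -/
lemma exists_bound (a : ι → E) (S : Finset ι) :
    ∃ C : ℝ, 0 ≤ C ∧ ∀ z ∈ span ℝ (a '' ↑S), ∀ δ : ℝ, 0 ≤ δ →
      (∀ i ∈ S, |⟪a i, z⟫| ≤ δ) → ‖z‖ ≤ C * δ := by
  classical
  set V : Submodule ℝ E := span ℝ (a '' ↑S) with hV
  set φ : V →ₗ[ℝ] (ι → ℝ) := LinearMap.pi (fun i =>
    if i ∈ S then ((innerSL ℝ (a i)).toLinearMap.comp V.subtype) else 0) with hφ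
  have hφapp : ∀ (z : V) (i : ι), φ z i = if i ∈ S then ⟪a i, (z : E)⟫ else 0 := by
    intro z i
    simp only [hφ, LinearMap.pi_apply]
    split_ifs <;> simp
  have hker : LinearMap.ker φ = ⊥ := by
    rw [LinearMap.ker_eq_bot']
    intro z hz
    have hz' : ∀ i ∈ S, ⟪a i, (z : E)⟫ = 0 := by
      intro i hi
      have h1 := congrFun hz i
      rw [hφapp z i, if_pos hi] at h1
      exact h1
    have horth : ∀ u ∈ V, ⟪u, (z : E)⟫ = 0 := by
      intro u hu
      induction hu using span_induction with
      | mem u hu =>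
        obtain ⟨i, hi, rfl⟩ := hu
        exact hz' i hi
      | zero => simp
      | add u w hu hw ihu ihw => rw [inner_add_left, ihu, ihw, add_zero]
      | smul c u hu ihu => rw [real_inner_smul_left, ihu, mul_zero]
    have : ⟪(z : E), (z : E)⟫ = 0 := horth _ z.2
    have : (z : E) = 0 := inner_self_eq_zero.mp this
    exact Subtype.ext this
  obtain ⟨Knn, hKpos, hanti⟩ := φ.exists_antilipschitzWith hker
  refine ⟨Knn, Knn.coe_nonneg, fun z hz δ hδ hbound => ?_⟩
  set zz : V := ⟨z, hz⟩ with hzz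
  have h1 : ‖z‖ ≤ Knn * ‖φ zz‖ := by
    have := hanti.le_mul_dist zz 0
    simpa [dist_eq_norm, map_zero] using this
  have h2 : ‖φ zz‖ ≤ δ := by
    rw [pi_norm_le_iff_of_nonneg hδ]
    intro i
    rw [hφapp zz i]
    split_ifs with hi
    · rw [Real.norm_eq_abs]; exact hbound i hi
    · simpa using hδ
  calc ‖z‖ ≤ Knn * ‖φ zz‖ := h1
    _ ≤ Knn * δ := mul_le_mul_of_nonneg_left h2 Knn.coe_nonneg

/-- The projection residual lies in the span of the active constraints. -/
lemma active_span {a : ι → E} {q : ι → ℝ} {v p : E} (hp : p ∈ Feas a q)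
    (h : ∀ w ∈ Feas a q, ⟪v - p, w - p⟫ ≤ 0)
    (S : Finset ι) (hS : ∀ i ∉ S, q i < ⟪a i, p⟫) :
    v - p ∈ span ℝ (a '' ↑S) := by
  classical
  set V : Submodule ℝ E := span ℝ (a '' ↑S) with hV
  rw [← V.orthogonal_orthogonal]
  rw [Submodule.mem_orthogonal]
  intro d hd
  have had : ∀ i ∈ S, ⟪a i, d⟫ = 0 := by
    intro i hi
    exact (Submodule.mem_orthogonal V d).mp hd (a i)
      (subset_span (Set.mem_image_of_mem a (by exact_mod_cast hi)))
  have hslack : ∀ i ∉ S, 0 < ⟪a i, p⟫ - q i := fun i hi => sub_pos.mpr (hS i hi)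
  obtain ⟨ε, hε0, hεp⟩ : ∃ ε : ℝ, 0 < ε ∧ ∀ i ∉ S, ε * |⟪a i, d⟫| ≤ ⟪a i, p⟫ - q i := by
    set t := Finset.univ.filter (fun i => i ∉ S) with ht
    rcases t.eq_empty_or_nonempty with hemp | hne
    · refine ⟨1, one_pos, fun i hi => absurd ?_ (by simp [hemp] : i ∉ t)⟩
      simp [ht, hi]
    · set f : ι → ℝ := fun i => (⟪a i, p⟫ - q i) / (|⟪a i, d⟫| + 1) with hf
      refine ⟨t.inf' hne f, ?_, ?_⟩
      · rw [Finset.lt_inf'_iff]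
        intro i hi
        have hi' : i ∉ S := by simpa [ht] using hi
        exact div_pos (hslack i hi') (by positivity)
      · intro i hi
        have hit : i ∈ t := by simp [ht, hi]
        have h1 : t.inf' hne f ≤ f i := Finset.inf'_le f hit
        have h2 : f i * |⟪a i, d⟫| ≤ ⟪a i, p⟫ - q i := by
          rw [hf]
          rw [div_mul_eq_mul_div, div_le_iff₀ (by positivity)]
          have := hslack i hi
          nlinarith [abs_nonneg (⟪a i, d⟫ : ℝ)]
        calc t.inf' hne f * |⟪a i, d⟫| ≤ f i * |⟪a i, d⟫| :=
              mul_le_mul_of_nonneg_right h1 (abs_nonneg _)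
          _ ≤ ⟪a i, p⟫ - q i := h2
  have hfeas : ∀ σ : ℝ, |σ| ≤ ε → p + σ • d ∈ Feas a q := by
    intro σ hσ i
    rw [show (⟪a i, p + σ • d⟫ : ℝ) = ⟪a i, p⟫ + σ * ⟪a i, d⟫ by
      rw [inner_add_right, real_inner_smul_right]]
    by_cases hi : i ∈ S
    · rw [had i hi, mul_zero, add_zero]; exact hp i
    · have h1 : |σ * ⟪a i, d⟫| ≤ ε * |⟪a i, d⟫| := by
        rw [abs_mul]
        exact mul_le_mul_of_nonneg_right hσ (abs_nonneg _)
      have h2 := hεp i hi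
      have h3 := neg_abs_le (σ * (⟪a i, d⟫ : ℝ))
      linarith
  have key : ∀ σ : ℝ, |σ| ≤ ε → σ * ⟪v - p, d⟫ ≤ 0 := by
    intro σ hσ
    have := h (p + σ • d) (hfeas σ hσ)
    rw [add_sub_cancel_left, real_inner_smul_right] at this
    linarith [this]
  have k1 := key ε (by rw [abs_of_pos hε0])
  have k2 := key (-ε) (by rw [abs_neg, abs_of_pos hε0])
  have : ⟪v - p, d⟫ = 0 := by nlinarith
  rw [real_inner_comm] at this
  exact this

/-- Globalization of a uniform local Lipschitz bound on `[0,1]`. -/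
lemma global_of_local {f : ℝ → E} {L : ℝ} (hL : 0 ≤ L)
    (h : ∀ t₀ ∈ Icc (0:ℝ) 1, ∃ ε > 0, ∀ t ∈ Icc (0:ℝ) 1,
      |t - t₀| < ε → ‖f t - f t₀‖ ≤ L * |t - t₀|) :
    ‖f 1 - f 0‖ ≤ L := by
  set A := {t : ℝ | t ∈ Icc (0:ℝ) 1 ∧ ‖f t - f 0‖ ≤ L * t} with hA
  have h0 : (0:ℝ) ∈ A := ⟨⟨le_refl 0, zero_le_one⟩, by simp⟩
  have hbdd : BddAbove A := ⟨1, fun t ht => ht.1.2⟩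
  have hAne : A.Nonempty := ⟨0, h0⟩
  set u := sSup A with hu
  have hu0 : 0 ≤ u := le_csSup hbdd h0
  have hu1 : u ≤ 1 := csSup_le hAne fun t ht => ht.1.2
  have huI : u ∈ Icc (0:ℝ) 1 := ⟨hu0, hu1⟩
  obtain ⟨ε, hε0, hε⟩ := h u huI
  have huA : u ∈ A := by
    obtain ⟨t, htA, hlt⟩ := exists_lt_of_lt_csSup hAne (by linarith : u - ε < u)
    have htu : t ≤ u := le_csSup hbdd htA
    have h1 : |t - u| < ε := by rw [abs_sub_comm, abs_of_nonneg (by linarith)]; linarith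
    have h2 := hε t htA.1 h1
    rw [abs_sub_comm, abs_of_nonneg (by linarith)] at h2
    have h3 : ‖f u - f 0‖ ≤ ‖f t - f u‖ + ‖f t - f 0‖ := by
      have := dist_triangle (f u) (f t) (f 0)
      rw [dist_eq_norm, dist_eq_norm, dist_eq_norm, norm_sub_rev (f u) (f t)] at this
      exact this
    refine ⟨huI, ?_⟩
    have h4 := htA.2
    nlinarith [mul_le_mul_of_nonneg_left (sub_nonneg.mpr htu) hL]
  by_cases hu_lt : u < 1
  · exfalso
    set t' := min 1 (u + ε/2) with ht'
    have ht'I : t' ∈ Icc (0:ℝ) 1 := ⟨le_min (by linarith) (by linarith), min_le_left _ _⟩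
    have ht'u : u < t' := lt_min hu_lt (by linarith)
    have ht'le : t' ≤ u + ε/2 := min_le_right _ _
    have habs : |t' - u| < ε := by rw [abs_of_pos (by linarith)]; linarith
    have h3 := hε t' ht'I habs
    rw [abs_of_pos (by linarith)] at h3
    have h4 : ‖f t' - f 0‖ ≤ ‖f t' - f u‖ + ‖f u - f 0‖ := by
      have := dist_triangle (f t') (f u) (f 0)
      rw [dist_eq_norm, dist_eq_norm, dist_eq_norm] at this
      exact this
    have h5 : t' ∈ A := ⟨ht'I, by nlinarith [huA.2]⟩
    exact absurd (le_csSup hbdd h5) (not_le.mpr ht'u)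
  · have hu_eq : u = 1 := le_antisymm hu1 (not_lt.mp hu_lt)
    rw [hu_eq] at huA
    simpa using huA.2

/-- Convex mixing of feasible points for mixed right-hand sides. -/
lemma mix_mem {a : ι → E} {qa qb : ι → ℝ} {σ : ℝ} {w y : E} (h0 : 0 ≤ σ) (h1 : σ ≤ 1)
    (hw : w ∈ Feas a qa) (hy : y ∈ Feas a qb) :
    (1 - σ) • w + σ • y ∈ Feas a (fun i => (1 - σ) * qa i + σ * qb i) := by
  intro i
  have hw' := hw i
  have hy' := hy i
  have e : (⟪a i, (1 - σ) • w + σ • y⟫ : ℝ) = (1 - σ) * ⟪a i, w⟫ + σ * ⟪a i, y⟫ := by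
    rw [inner_add_right, real_inner_smul_right, real_inner_smul_right]
  rw [e]
  exact add_le_add (mul_le_mul_of_nonneg_left hw' (by linarith))
    (mul_le_mul_of_nonneg_left hy' h0)

/-- Continuity of the projection along the segment of right-hand sides. -/
lemma seg_cont {a : ι → E} {q₁ q₂ : ι → ℝ} {v y₁ y₂ : E} {p : ℝ → E}
    (hy₁ : y₁ ∈ Feas a q₁) (hy₂ : y₂ ∈ Feas a q₂)
    (hfeas : ∀ t ∈ Icc (0:ℝ) 1, p t ∈ Feas a (fun i => (1 - t) * q₁ i + t * q₂ i))
    (hvi : ∀ t ∈ Icc (0:ℝ) 1, ∀ w ∈ Feas a (fun i => (1 - t) * q₁ i + t * q₂ i),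
      ⟪v - p t, w - p t⟫ ≤ 0) :
    ContinuousOn p (Icc (0:ℝ) 1) := by
  classical
  set Q : ℝ → ι → ℝ := fun t i => (1 - t) * q₁ i + t * q₂ i with hQdef
  set R : ℝ := ‖v - y₁‖ + ‖v - y₂‖ with hR
  have hboundp : ∀ t ∈ Icc (0:ℝ) 1, dist (p t) v ≤ R := by
    intro t ht
    have hmixt : (1 - t) • y₁ + t • y₂ ∈ Feas a (Q t) := mix_mem ht.1 ht.2 hy₁ hy₂
    have h1 : ‖v - p t‖ ≤ ‖v - ((1 - t) • y₁ + t • y₂)‖ :=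
      vi_min (hvi t ht) _ hmixt
    have h2 : v - ((1 - t) • y₁ + t • y₂) = (1 - t) • (v - y₁) + t • (v - y₂) := by
      module
    have h3 : ‖v - ((1 - t) • y₁ + t • y₂)‖ ≤ (1 - t) * ‖v - y₁‖ + t * ‖v - y₂‖ := by
      rw [h2]
      refine le_trans (norm_add_le _ _) ?_
      rw [norm_smul, norm_smul, Real.norm_eq_abs, Real.norm_eq_abs,
        abs_of_nonneg (by linarith [ht.2] : (0:ℝ) ≤ 1 - t), abs_of_nonneg ht.1]
    rw [dist_eq_norm, ← norm_sub_rev]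
    have hy1n : 0 ≤ ‖v - y₁‖ := norm_nonneg _
    have hy2n : 0 ≤ ‖v - y₂‖ := norm_nonneg _
    nlinarith [ht.1, ht.2]
  intro t₀ ht₀
  have hkey : ∀ ε > 0, ∃ η > 0, ∀ t ∈ Icc (0:ℝ) 1,
      dist t t₀ < η → dist (p t) (p t₀) < ε := by
    by_contra hcon
    push_neg at hcon
    obtain ⟨ε, hε0, hbad⟩ := hcon
    have hsel : ∀ k : ℕ, ∃ t, t ∈ Icc (0:ℝ) 1 ∧ dist t t₀ < 1/(k+1) ∧
        ε ≤ dist (p t) (p t₀) := by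
      intro k
      obtain ⟨t, ht, h1, h2⟩ := hbad (1/(k+1)) (by positivity)
      exact ⟨t, ht, h1, h2⟩
    choose u hu1 hu2 hu3 using hsel
    have hu_tend : Filter.Tendsto u Filter.atTop (nhds t₀) := by
      rw [tendsto_iff_dist_tendsto_zero]
      refine squeeze_zero (fun k => dist_nonneg) (fun k => le_of_lt (hu2 k)) ?_
      exact tendsto_one_div_add_atTop_nhds_zero_nat
    have hball : ∀ k, p (u k) ∈ Metric.closedBall v R := fun k =>
      Metric.mem_closedBall.mpr (hboundp (u k) (hu1 k))
    obtain ⟨z, _, φ, hφmono, hφtend⟩ :=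
      tendsto_subseq_of_bounded Metric.isBounded_closedBall hball
    have hφtend' : Filter.Tendsto (fun k => p (u (φ k))) Filter.atTop (nhds z) := hφtend
    have huφ : Filter.Tendsto (fun k => u (φ k)) Filter.atTop (nhds t₀) :=
      hu_tend.comp hφmono.tendsto_atTop
    have huφd : Filter.Tendsto (fun k => dist (u (φ k)) t₀) Filter.atTop (nhds 0) :=
      tendsto_iff_dist_tendsto_zero.mp huφ
    -- the limit point is feasible
    have hzF : z ∈ Feas a (Q t₀) := by
      intro i
      have hQc : Filter.Tendsto (fun k => Q (u (φ k)) i) Filter.atTop (nhds (Q t₀ i)) := by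
        have : Continuous fun t : ℝ => Q t i := by
          simp only [hQdef]
          exact ((continuous_const.sub continuous_id).mul continuous_const).add
            (continuous_id.mul continuous_const)
        exact (this.tendsto t₀).comp huφ
      have hIc : Filter.Tendsto (fun k => (⟪a i, p (u (φ k))⟫ : ℝ)) Filter.atTop
          (nhds ⟪a i, z⟫) := Filter.Tendsto.inner tendsto_const_nhds hφtend'
      exact le_of_tendsto_of_tendsto' hQc hIc (fun k => hfeas (u (φ k)) (hu1 (φ k)) i)
    -- the limit point satisfies the variational inequality
    have hzVI : ∀ w ∈ Feas a (Q t₀), ⟪v - z, w - z⟫ ≤ 0 := by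
      intro w hw
      set sσ : ℕ → ℝ := fun k => if t₀ ≤ u (φ k) then (u (φ k) - t₀) / (1 - t₀)
        else (t₀ - u (φ k)) / t₀ with hsσ
      set wk : ℕ → E := fun k => (1 - sσ k) • w + sσ k • (if t₀ ≤ u (φ k) then y₂ else y₁)
        with hwkdef
      have hs0 : ∀ k, 0 ≤ sσ k := by
        intro k
        simp only [hsσ]
        split_ifs with hc
        · exact div_nonneg (by linarith) (by linarith [ht₀.2])
        · exact div_nonneg (by linarith [not_le.mp hc]) ht₀.1
      have hwkF : ∀ k, wk k ∈ Feas a (Q (u (φ k))) := by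
        intro k
        simp only [hwkdef, hsσ]
        by_cases hc : t₀ ≤ u (φ k)
        · rw [if_pos hc, if_pos hc]
          by_cases h1 : t₀ = 1
          · have hτ : u (φ k) = 1 := le_antisymm (hu1 (φ k)).2 (h1 ▸ hc)
            rw [hτ, h1]
            simp only [sub_self, zero_div, sub_zero, one_smul, zero_smul, add_zero]
            rw [h1] at hw
            exact hw
          · have hlt : t₀ < 1 := lt_of_le_of_ne ht₀.2 h1
            set σ := (u (φ k) - t₀) / (1 - t₀) with hσdef
            have h0σ : 0 ≤ σ := div_nonneg (by linarith) (by linarith)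
            have h1σ : σ ≤ 1 := by
              rw [hσdef, div_le_one (by linarith)]
              linarith [(hu1 (φ k)).2]
            have hm := mix_mem h0σ h1σ hw hy₂
            have hne1 : (1:ℝ) - t₀ ≠ 0 := by linarith
            have heq : (fun i => (1 - σ) * Q t₀ i + σ * q₂ i) = Q (u (φ k)) := by
              funext i
              simp only [hQdef, hσdef]
              field_simp
              ring
            rwa [heq] at hm
        · rw [if_neg hc, if_neg hc]
          have hlt : u (φ k) < t₀ := not_le.mp hc
          have h0t : 0 < t₀ := lt_of_le_of_lt (hu1 (φ k)).1 hlt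
          set σ := (t₀ - u (φ k)) / t₀ with hσdef
          have h0σ : 0 ≤ σ := div_nonneg (by linarith) (by linarith)
          have h1σ : σ ≤ 1 := by
            rw [hσdef, div_le_one h0t]
            linarith [(hu1 (φ k)).1]
          have hm := mix_mem h0σ h1σ hw hy₁
          have hne1 : t₀ ≠ 0 := ne_of_gt h0t
          have heq : (fun i => (1 - σ) * Q t₀ i + σ * q₁ i) = Q (u (φ k)) := by
            funext i
            simp only [hQdef, hσdef]
            field_simp
            ring
          rwa [heq] at hm
      have hsle : ∀ k, sσ k ≤ (max (1 - t₀)⁻¹ t₀⁻¹) * dist (u (φ k)) t₀ := by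
        intro k
        simp only [hsσ]
        split_ifs with hc
        · rw [Real.dist_eq, abs_of_nonneg (by linarith)]
          rw [div_eq_mul_inv, mul_comm]
          exact mul_le_mul_of_nonneg_right (le_max_left _ _) (by linarith)
        · rw [Real.dist_eq, abs_sub_comm, abs_of_nonneg (by linarith [not_le.mp hc])]
          rw [div_eq_mul_inv, mul_comm]
          exact mul_le_mul_of_nonneg_right (le_max_right _ _) (by linarith [not_le.mp hc])
      have hstend : Filter.Tendsto sσ Filter.atTop (nhds 0) := by
        refine squeeze_zero hs0 hsle ?_
        have := Filter.Tendsto.mul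
          (tendsto_const_nhds : Filter.Tendsto (fun _ : ℕ => max (1 - t₀)⁻¹ t₀⁻¹)
            Filter.atTop (nhds (max (1 - t₀)⁻¹ t₀⁻¹))) huφd
        simpa using this
      have hwk_tend : Filter.Tendsto wk Filter.atTop (nhds w) := by
        rw [tendsto_iff_norm_sub_tendsto_zero]
        refine squeeze_zero (fun k => norm_nonneg _)
          (g := fun k => sσ k * (‖y₁ - w‖ + ‖y₂ - w‖)) (fun k => ?_) ?_
        · have e : wk k - w = sσ k • ((if t₀ ≤ u (φ k) then y₂ else y₁) - w) := by
            simp only [hwkdef]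
            rw [smul_sub, sub_smul, one_smul]
            abel
          rw [e, norm_smul, Real.norm_eq_abs, abs_of_nonneg (hs0 k)]
          refine mul_le_mul_of_nonneg_left ?_ (hs0 k)
          split_ifs
          · linarith [norm_nonneg (y₁ - w), le_refl ‖y₂ - w‖]
          · linarith [norm_nonneg (y₂ - w), le_refl ‖y₁ - w‖]
        · have := hstend.mul (tendsto_const_nhds :
            Filter.Tendsto (fun _ : ℕ => ‖y₁ - w‖ + ‖y₂ - w‖) Filter.atTop _)
          simpa using this
      have hV : ∀ k, (⟪v - p (u (φ k)), wk k - p (u (φ k))⟫ : ℝ) ≤ 0 := fun k =>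
        hvi (u (φ k)) (hu1 (φ k)) (wk k) (hwkF k)
      have hlim : Filter.Tendsto (fun k => (⟪v - p (u (φ k)), wk k - p (u (φ k))⟫ : ℝ))
          Filter.atTop (nhds ⟪v - z, w - z⟫) :=
        Filter.Tendsto.inner (tendsto_const_nhds.sub hφtend')
          (hwk_tend.sub hφtend')
      exact le_of_tendsto hlim (Filter.Eventually.of_forall hV)
    have hz_eq : z = p t₀ := vi_unique hzF (hfeas t₀ ht₀) hzVI (hvi t₀ ht₀)
    have hdistlim : Filter.Tendsto (fun k => dist (p (u (φ k))) (p t₀)) Filter.atTop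
        (nhds (dist z (p t₀))) := hφtend'.dist tendsto_const_nhds
    have hcontra : ε ≤ dist z (p t₀) :=
      ge_of_tendsto hdistlim (Filter.Eventually.of_forall fun k => hu3 (φ k))
    rw [hz_eq, dist_self] at hcontra
    linarith
  rw [Metric.continuousWithinAt_iff]
  intro ε hε
  obtain ⟨η, hη, hh⟩ := hkey ε hε
  exact ⟨η, hη, fun t ht hdt => hh t ht hdt⟩

/-- Core result: the metric projection onto `Feas a q` is Lipschitz in `q`,
uniformly in the projected point. -/
theorem core (a : ι → E) :
    ∃ K : ℝ, 0 ≤ K ∧ ∀ (q₁ q₂ : ι → ℝ) (v p₁ p₂ : E) (δ : ℝ), 0 ≤ δ →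
      (∀ i, |q₁ i - q₂ i| ≤ δ) →
      p₁ ∈ Feas a q₁ → (∀ w ∈ Feas a q₁, ⟪v - p₁, w - p₁⟫ ≤ 0) →
      p₂ ∈ Feas a q₂ → (∀ w ∈ Feas a q₂, ⟪v - p₂, w - p₂⟫ ≤ 0) →
      ‖p₁ - p₂‖ ≤ K * δ := by
  classical
  choose C hC0 hC using exists_bound a
  refine ⟨∑ S : Finset ι, C S, Finset.sum_nonneg (fun S _ => hC0 S), ?_⟩
  set K := ∑ S : Finset ι, C S with hKdef
  have hK0 : 0 ≤ K := Finset.sum_nonneg (fun S _ => hC0 S)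
  have hCK : ∀ S : Finset ι, C S ≤ K :=
    fun S => Finset.single_le_sum (fun S _ => hC0 S) (Finset.mem_univ S)
  intro q₁ q₂ v p₁ p₂ δ hδ hq hp₁ hvi₁ hp₂ hvi₂
  set Q : ℝ → ι → ℝ := fun t i => (1 - t) * q₁ i + t * q₂ i with hQdef
  have hQ0 : Q 0 = q₁ := by funext i; simp [hQdef]
  have hQ1 : Q 1 = q₂ := by funext i; simp [hQdef]
  -- nonemptiness along the segment
  have hne : ∀ t ∈ Icc (0:ℝ) 1, (Feas a (Q t)).Nonempty := by
    intro t ht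
    exact ⟨_, mix_mem ht.1 ht.2 hp₁ hp₂⟩
  -- choose projections along the segment
  have hex : ∀ t : ℝ, ∃ y : E, t ∈ Icc (0:ℝ) 1 →
      (y ∈ Feas a (Q t) ∧ ∀ w ∈ Feas a (Q t), ⟪v - y, w - y⟫ ≤ 0) := by
    intro t
    by_cases ht : t ∈ Icc (0:ℝ) 1
    · obtain ⟨y, hy1, hy2⟩ := exists_vi (hne t ht) v
      exact ⟨y, fun _ => ⟨hy1, hy2⟩⟩
    · exact ⟨v, fun h => absurd h ht⟩
  choose p hpp using hex
  have hfeas : ∀ t ∈ Icc (0:ℝ) 1, p t ∈ Feas a (Q t) := fun t ht => (hpp t ht).1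
  have hvi : ∀ t ∈ Icc (0:ℝ) 1, ∀ w ∈ Feas a (Q t), ⟪v - p t, w - p t⟫ ≤ 0 :=
    fun t ht => (hpp t ht).2
  -- identify endpoints
  have hp₁' : p₁ ∈ Feas a (Q 0) := by rw [hQ0]; exact hp₁
  have hvi₁' : ∀ w ∈ Feas a (Q 0), ⟪v - p₁, w - p₁⟫ ≤ 0 := by rw [hQ0]; exact hvi₁
  have hp₂' : p₂ ∈ Feas a (Q 1) := by rw [hQ1]; exact hp₂
  have hvi₂' : ∀ w ∈ Feas a (Q 1), ⟪v - p₂, w - p₂⟫ ≤ 0 := by rw [hQ1]; exact hvi₂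
  have hI0 : (0:ℝ) ∈ Icc (0:ℝ) 1 := ⟨le_refl 0, zero_le_one⟩
  have hI1 : (1:ℝ) ∈ Icc (0:ℝ) 1 := ⟨zero_le_one, le_refl 1⟩
  have hp0 : p 0 = p₁ := vi_unique (hfeas 0 hI0) hp₁' (hvi 0 hI0) hvi₁'
  have hp1 : p 1 = p₂ := vi_unique (hfeas 1 hI1) hp₂' (hvi 1 hI1) hvi₂'
  -- continuity
  have hcont : ContinuousOn p (Icc (0:ℝ) 1) := seg_cont hp₁ hp₂ hfeas hvi
  -- the pieces
  set T : Finset ι → Set ℝ := fun S => {t | t ∈ Icc (0:ℝ) 1 ∧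
    (∀ i ∈ S, (⟪a i, p t⟫ : ℝ) = Q t i) ∧ p t - v ∈ span ℝ (a '' ↑S)} with hTdef
  have hQcont : ∀ i, Continuous fun t : ℝ => Q t i := by
    intro i
    simp only [hQdef]
    exact ((continuous_const.sub continuous_id).mul continuous_const).add
      (continuous_id.mul continuous_const)
  have hTclosed : ∀ S, IsClosed (T S) := by
    intro S
    have hrepr : T S = (Icc (0:ℝ) 1 ∩ (fun t => p t - v) ⁻¹'
        ((span ℝ (a '' ↑S) : Submodule ℝ E) : Set E)) ∩
        ⋂ i ∈ S, (Icc (0:ℝ) 1 ∩ (fun t => (⟪a i, p t⟫ : ℝ) - Q t i) ⁻¹' {0}) := by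
      ext t
      simp only [hTdef, Set.mem_setOf_eq, Set.mem_inter_iff, Set.mem_iInter,
        Set.mem_preimage, Set.mem_singleton_iff, SetLike.mem_coe, sub_eq_zero]
      constructor
      · rintro ⟨h1, h2, h3⟩
        exact ⟨⟨h1, h3⟩, fun i hi => ⟨h1, h2 i hi⟩⟩
      · rintro ⟨⟨h1, h3⟩, h2⟩
        exact ⟨h1, fun i hi => (h2 i hi).2, h3⟩
    rw [hrepr]
    refine IsClosed.inter ?_ (isClosed_biInter fun i _ => ?_)
    · exact (hcont.sub continuousOn_const).preimage_isClosed_of_isClosed isClosed_Icc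
        (Submodule.closed_of_finiteDimensional _)
    · exact ((continuousOn_const.inner hcont).sub (hQcont i).continuousOn).preimage_isClosed_of_isClosed
        isClosed_Icc isClosed_singleton
  -- every point of the segment lies in a piece
  set Sact : ℝ → Finset ι := fun t =>
    Finset.univ.filter (fun i => (⟪a i, p t⟫ : ℝ) = Q t i) with hSact
  have hcover : ∀ t ∈ Icc (0:ℝ) 1, t ∈ T (Sact t) := by
    intro t ht
    refine ⟨ht, fun i hi => (Finset.mem_filter.mp hi).2, ?_⟩
    have hspan := active_span (hfeas t ht) (hvi t ht) (Sact t) ?_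
    · have := neg_mem hspan
      simpa using this
    · intro i hi
      refine lt_of_le_of_ne (hfeas t ht i) ?_
      intro hcontr
      exact hi (Finset.mem_filter.mpr ⟨Finset.mem_univ i, hcontr.symm⟩)
  -- estimate within a piece
  have hpiece : ∀ S : Finset ι, ∀ t ∈ T S, ∀ t' ∈ T S,
      ‖p t - p t'‖ ≤ C S * (δ * |t - t'|) := by
    intro S t ht t' ht'
    have hz : p t - p t' ∈ span ℝ (a '' ↑S) := by
      have := sub_mem ht.2.2 ht'.2.2
      simpa using this
    refine hC S _ hz _ (by positivity) ?_
    intro i hi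
    have e : (⟪a i, p t - p t'⟫ : ℝ) = Q t i - Q t' i := by
      rw [inner_sub_right, ht.2.1 i hi, ht'.2.1 i hi]
    rw [e]
    have e2 : Q t i - Q t' i = (t - t') * (q₂ i - q₁ i) := by
      simp only [hQdef]; ring
    rw [e2, abs_mul]
    rw [mul_comm δ |t - t'|]
    refine mul_le_mul_of_nonneg_left ?_ (abs_nonneg _)
    rw [abs_sub_comm]
    exact hq i
  -- uniform local Lipschitz estimate
  have hlocal : ∀ t₀ ∈ Icc (0:ℝ) 1, ∃ ε > 0, ∀ t ∈ Icc (0:ℝ) 1,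
      |t - t₀| < ε → ‖p t - p t₀‖ ≤ (K * δ) * |t - t₀| := by
    intro t₀ ht₀
    set U : Set ℝ := ⋃ S ∈ {S : Finset ι | t₀ ∉ T S}, T S with hUdef
    have hUclosed : IsClosed U :=
      Set.Finite.isClosed_biUnion (Set.toFinite _) (fun S _ => hTclosed S)
    have ht₀U : t₀ ∉ U := by
      simp only [hUdef, Set.mem_iUnion, Set.mem_setOf_eq, not_exists]
      intro S hS
      exact fun h => hS h
    obtain ⟨ε, hε0, hball⟩ := Metric.isOpen_iff.mp hUclosed.isOpen_compl t₀ ht₀U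
    refine ⟨ε, hε0, fun t ht hdist => ?_⟩
    have htU : t ∉ U := hball (by rwa [Metric.mem_ball, Real.dist_eq])
    have htT : t ∈ T (Sact t) := hcover t ht
    have ht₀T : t₀ ∈ T (Sact t) := by
      by_contra hcontr
      exact htU (Set.mem_biUnion (by exact hcontr) htT)
    calc ‖p t - p t₀‖ ≤ C (Sact t) * (δ * |t - t₀|) := hpiece _ t htT t₀ ht₀T
      _ ≤ K * (δ * |t - t₀|) :=
          mul_le_mul_of_nonneg_right (hCK _) (by positivity)
      _ = (K * δ) * |t - t₀| := by ring
  have hglobal := global_of_local (mul_nonneg hK0 hδ) hlocal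
  rw [hp0, hp1] at hglobal
  rw [norm_sub_rev]
  exact hglobal

end Stmt18Aux

open scoped RealInnerProductSpace

/-- Lipschitz continuity in the parameter of the metric projection onto the moving
polyhedron `Ω(x) = {y : A y ≥ b(x), y ≥ c}`, where `b` is Lipschitz on `X`. -/
theorem stmt_18 {m n r : ℕ}
    (A : Matrix (Fin r) (Fin n) ℝ) (c : EuclideanSpace ℝ (Fin n))
    (X : Set (EuclideanSpace ℝ (Fin m)))
    (b : EuclideanSpace ℝ (Fin m) → EuclideanSpace ℝ (Fin r))
    (Lb : ℝ) (hLb : 0 ≤ Lb)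
    (hb : ∀ x₁ ∈ X, ∀ x₂ ∈ X, ‖b x₁ - b x₂‖ ≤ Lb * ‖x₁ - x₂‖)
    (Ω : EuclideanSpace ℝ (Fin m) → Set (EuclideanSpace ℝ (Fin n)))
    (hΩ : ∀ x, Ω x = {y : EuclideanSpace ℝ (Fin n) |
      (∀ i : Fin r, b x i ≤ ∑ j : Fin n, A i j * y j) ∧ (∀ j : Fin n, c j ≤ y j)})
    (hne : ∀ x ∈ X, (Ω x).Nonempty)
    (P : EuclideanSpace ℝ (Fin m) → EuclideanSpace ℝ (Fin n) → EuclideanSpace ℝ (Fin n))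
    (hP : ∀ x ∈ X, ∀ v : EuclideanSpace ℝ (Fin n),
      P x v ∈ Ω x ∧ ∀ w ∈ Ω x, ⟪v - P x v, w - P x v⟫ ≤ 0) :
    ∃ L' : ℝ, 0 ≤ L' ∧ ∀ v : EuclideanSpace ℝ (Fin n), ∀ x₁ ∈ X, ∀ x₂ ∈ X,
      ‖P x₁ v - P x₂ v‖ ≤ L' * ‖x₁ - x₂‖ := by
  classical
  -- the constraint rows: rows of `A`, then the coordinate constraints `y j ≥ c j`
  set a : (Fin r ⊕ Fin n) → EuclideanSpace ℝ (Fin n) :=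
    Sum.elim (fun i => (WithLp.toLp 2 (fun j => A i j) : EuclideanSpace ℝ (Fin n)))
      (fun j => EuclideanSpace.single j 1) with ha
  set q : EuclideanSpace ℝ (Fin m) → (Fin r ⊕ Fin n) → ℝ :=
    fun x => Sum.elim (b x) c with hq
  have einl : ∀ (i : Fin r) (y : EuclideanSpace ℝ (Fin n)),
      (⟪a (Sum.inl i), y⟫ : ℝ) = ∑ j, A i j * y j := by
    intro i y
    rw [ha]
    simp [PiLp.inner_apply, RCLike.inner_apply, conj_trivial, mul_comm]
  have einr : ∀ (j : Fin n) (y : EuclideanSpace ℝ (Fin n)),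
      (⟪a (Sum.inr j), y⟫ : ℝ) = y j := by
    intro j y
    rw [ha]
    simp [EuclideanSpace.inner_single_left]
  have hFeas : ∀ x, Ω x = Stmt18Aux.Feas a (q x) := by
    intro x
    rw [hΩ x]
    ext y
    constructor
    · rintro ⟨h1, h2⟩ i
      cases i with
      | inl i => rw [einl i y]; exact h1 i
      | inr j => rw [einr j y]; exact h2 j
    · intro h
      constructor
      · intro i
        have := h (Sum.inl i)
        rwa [einl i y] at this
      · intro j
        have := h (Sum.inr j)
        rwa [einr j y] at this
  obtain ⟨K, hK0, hK⟩ := Stmt18Aux.core a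
  refine ⟨K * Lb, mul_nonneg hK0 hLb, fun v x₁ hx₁ x₂ hx₂ => ?_⟩
  have hδ : (0:ℝ) ≤ Lb * ‖x₁ - x₂‖ := mul_nonneg hLb (norm_nonneg _)
  have hq12 : ∀ i, |q x₁ i - q x₂ i| ≤ Lb * ‖x₁ - x₂‖ := by
    intro i
    cases i with
    | inl i =>
      have hcoord : |(b x₁ - b x₂) i| ≤ ‖b x₁ - b x₂‖ := by
        have h := abs_real_inner_le_norm
          (EuclideanSpace.single i (1:ℝ)) (b x₁ - b x₂)
        rw [EuclideanSpace.inner_single_left] at h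
        simpa [EuclideanSpace.norm_single] using h
      have h2 : (b x₁ - b x₂) i = b x₁ i - b x₂ i := rfl
      rw [h2] at hcoord
      have : |q x₁ (Sum.inl i) - q x₂ (Sum.inl i)| = |b x₁ i - b x₂ i| := by rw [hq]; rfl
      rw [this]
      exact le_trans hcoord (hb x₁ hx₁ x₂ hx₂)
    | inr j =>
      have : q x₁ (Sum.inr j) - q x₂ (Sum.inr j) = 0 := by rw [hq]; simp
      rw [this, abs_zero]
      exact mul_nonneg hLb (norm_nonneg _)
  have h1 := hP x₁ hx₁ v
  have h2 := hP x₂ hx₂ v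
  rw [hFeas x₁] at h1
  rw [hFeas x₂] at h2
  calc ‖P x₁ v - P x₂ v‖ ≤ K * (Lb * ‖x₁ - x₂‖) :=
        hK (q x₁) (q x₂) v _ _ _ hδ hq12 h1.1 h1.2 h2.1 h2.2
    _ = K * Lb * ‖x₁ - x₂‖ := by ring
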